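/- Let (M, dist) be a metric space, T : M → M a bijection, and write T^k for the k-th iterate of T for k ∈ ℤ (negative k denoting iterates of the inverse). Suppose T is expansive with constant δ > 0: for all x ≠ y in M there exists k ∈ ℤ with dist(T^k x, T^k y) > δ. Suppose moreover there are constants Λ' > 1, L ≥ Λ' and n₀ ∈ ℕ such that for every k ∈ ℤ the map T^k is Lipschitz with Lipschitz constant Λ'^{|k|} if |k| ≥ n₀, and with Lipschitz constant L^{|k|} if |k| < n₀. Then there exists C > 0 such that for every n ≥ 1 and all points x ≠ y with T^n x = x and T^n y = y, one has dist(x, y) ≥ C Λ'^{−n/2}. -/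

import Mathlib

/-- Lower bound on the distance between distinct periodic points of period `n`,
for an expansive bijection whose iterates `T^k` are Lipschitz with constant `Λ'^{|k|}`
for `|k| ≥ n₀` and `L^{|k|}` for `|k| < n₀`. -/
theorem stmt_2 {M : Type*} [MetricSpace M] (T : Equiv.Perm M)
    (δ : ℝ) (hδ : 0 < δ)
    (hexp : ∀ x y : M, x ≠ y → ∃ k : ℤ, δ < dist ((T ^ k) x) ((T ^ k) y))
    (Λ' L : ℝ) (hΛ' : 1 < Λ') (hL : Λ' ≤ L) (n₀ : ℕ)
    (hlip1 : ∀ k : ℤ, (n₀ : ℤ) ≤ |k| → ∀ x y : M,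
      dist ((T ^ k) x) ((T ^ k) y) ≤ Λ' ^ |k| * dist x y)
    (hlip2 : ∀ k : ℤ, |k| < (n₀ : ℤ) → ∀ x y : M,
      dist ((T ^ k) x) ((T ^ k) y) ≤ L ^ |k| * dist x y) :
    ∃ C : ℝ, 0 < C ∧ ∀ n : ℕ, 1 ≤ n → ∀ x y : M, x ≠ y →
      (T ^ (n : ℤ)) x = x → (T ^ (n : ℤ)) y = y →
      C * Λ' ^ (-(n : ℝ) / 2) ≤ dist x y := by
  have hL1 : (1:ℝ) < L := lt_of_lt_of_le hΛ' hL
  have hL0 : (0:ℝ) < L := lt_trans one_pos hL1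
  have hΛ0 : (0:ℝ) < Λ' := lt_trans one_pos hΛ'
  refine ⟨δ / L ^ n₀, by positivity, ?_⟩
  intro n hn x y hxy hx hy
  obtain ⟨k, hk⟩ := hexp x y hxy
  have hn' : (0:ℤ) < (n:ℤ) := by exact_mod_cast hn
  set r : ℤ := k % (n : ℤ) with hr
  have hr0 : 0 ≤ r := Int.emod_nonneg k (by omega)
  have hrn : r < (n:ℤ) := Int.emod_lt_of_pos k hn'
  set k' : ℤ := if 2 * r ≤ (n:ℤ) then r else r - n with hk'def
  have habs : 2 * |k'| ≤ (n : ℤ) := by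
    by_cases h : 2 * r ≤ (n:ℤ)
    · simp only [hk'def, if_pos h]; rw [abs_of_nonneg hr0]; omega
    · simp only [hk'def, if_neg h]; rw [abs_of_nonpos (by omega)]; omega
  -- k - k' is a multiple of n
  have hmul : ∃ m : ℤ, k - k' = (n:ℤ) * m := by
    by_cases h : 2 * r ≤ (n:ℤ)
    · refine ⟨k / n, ?_⟩
      simp only [hk'def, if_pos h]; simp only [hr]
      have h2 := Int.mul_ediv_add_emod k (n:ℤ)
      linarith
    · refine ⟨k / n + 1, ?_⟩
      simp only [hk'def, if_neg h]; simp only [hr]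
      have h2 := Int.mul_ediv_add_emod k (n:ℤ)
      ring_nf
      ring_nf at h2
      linarith
  obtain ⟨m, hm⟩ := hmul
  have hfix : ∀ z : M, (T ^ (n:ℤ)) z = z → (T ^ k') z = (T ^ k) z := by
    intro z hz
    have h1 : (T ^ ((n:ℤ) * m)) z = z := by
      rw [zpow_mul]
      exact Function.IsFixedPt.perm_zpow (by exact hz) m
    calc (T ^ k') z = (T ^ k') ((T ^ ((n:ℤ) * m)) z) := by rw [h1]
      _ = (T ^ (k' + (n:ℤ) * m)) z := by rw [zpow_add, Equiv.Perm.mul_apply]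
      _ = (T ^ k) z := by rw [show k' + (n:ℤ)*m = k by omega]
  rw [← hfix x hx, ← hfix y hy] at hk
  -- Lipschitz bound at k'
  have hbig : Λ' ^ ((n:ℝ)/2) ≥ 1 := Real.one_le_rpow hΛ'.le (by positivity)
  have hLn1 : (1:ℝ) ≤ L ^ n₀ := one_le_pow₀ hL1.le
  have hlipbound : dist ((T ^ k') x) ((T ^ k') y) ≤ (L ^ n₀ * Λ' ^ ((n:ℝ)/2)) * dist x y := by
    by_cases h : (n₀ : ℤ) ≤ |k'|
    · refine le_trans (hlip1 k' h x y) (mul_le_mul_of_nonneg_right ?_ dist_nonneg)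
      have h1 : Λ' ^ |k'| ≤ Λ' ^ ((n:ℝ)/2) := by
        rw [← Real.rpow_intCast Λ' |k'|]
        apply Real.rpow_le_rpow_of_exponent_le hΛ'.le
        have : ((|k'| : ℤ) : ℝ) * 2 ≤ (n:ℝ) := by exact_mod_cast (by omega : |k'| * 2 ≤ (n:ℤ))
        linarith
      exact h1.trans (le_mul_of_one_le_left (by positivity) hLn1)
    · push_neg at h
      refine le_trans (hlip2 k' h x y) (mul_le_mul_of_nonneg_right ?_ dist_nonneg)
      calc L ^ |k'| ≤ L ^ (n₀:ℤ) := zpow_le_zpow_right₀ hL1.le (by omega)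
        _ = L ^ n₀ := zpow_natCast L n₀
        _ ≤ L ^ n₀ * Λ' ^ ((n:ℝ)/2) := le_mul_of_one_le_right (by positivity) hbig
  have hδd : δ ≤ (L ^ n₀ * Λ' ^ ((n:ℝ)/2)) * dist x y := le_trans hk.le hlipbound
  rw [div_mul_eq_mul_div, div_le_iff₀ (by positivity : (0:ℝ) < L ^ n₀)]
  have hneg : Λ' ^ (-(n:ℝ)/2) = (Λ' ^ ((n:ℝ)/2))⁻¹ := by
    rw [← Real.rpow_neg hΛ0.le]; ring_nf
  rw [hneg, mul_inv_le_iff₀ (by positivity)]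
  exact hδd.trans (le_of_eq (by ring))
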